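/- Let μ₁, μ₂, σ₁, σ₂ ∈ ℝ^d with σ₁ and σ₂ componentwise nonnegative, and let f : ℝ^d → ℝ be K-Lipschitz for some K ≥ 0 and integrable against both N(μ₁, diag σ₁²) and N(μ₂, diag σ₂²). Then | ∫ f dN(μ₁, diag σ₁²) − ∫ f dN(μ₂, diag σ₂²) | ≤ K · √( ‖μ₁ − μ₂‖² + ‖σ₁ − σ₂‖² ). -/

import Mathlib

open MeasureTheory ProbabilityTheory

/-- The diagonal Gaussian measure `N(μ, diag σ²)` on `ℝ^d`: the product of the
one-dimensional Gaussians with mean `μ i` and variance `(σ i)²` (a Dirac mass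
whenever `σ i = 0`). -/
noncomputable def gaussianPi {d : ℕ} (μ σ : EuclideanSpace ℝ (Fin d)) :
    Measure (EuclideanSpace ℝ (Fin d)) :=
  (Measure.pi fun i => gaussianReal (μ i) ⟨(σ i) ^ 2, sq_nonneg _⟩).map (WithLp.toLp 2)

open Real


lemma gauss_pdf01 (x : ℝ) : gaussianPDFReal 0 1 x = (Real.sqrt (2*π))⁻¹ * Real.exp (-(1/2) * x^2) := by
  unfold gaussianPDFReal
  norm_num
  left
  ring_nf

lemma gauss_integral_eq (g : ℝ → ℝ) :
    ∫ x, g x ∂(gaussianReal 0 1) = ∫ x, gaussianPDFReal 0 1 x * g x := by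
  rw [gaussianReal_of_var_ne_zero 0 one_ne_zero]
  have h : gaussianPDF 0 1 = fun x => ((gaussianPDFReal 0 1 x).toNNReal : ENNReal) := rfl
  rw [h, integral_withDensity_eq_integral_smul (measurable_gaussianPDFReal 0 1).real_toNNReal]
  congr 1; funext x
  simp [NNReal.smul_def, Real.coe_toNNReal _ (gaussianPDFReal_nonneg 0 1 x)]

lemma gauss_integrable_iff (g : ℝ → ℝ) :
    Integrable g (gaussianReal 0 1) ↔ Integrable (fun x => gaussianPDFReal 0 1 x * g x) := by
  rw [gaussianReal_of_var_ne_zero 0 one_ne_zero]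
  have h : gaussianPDF 0 1 = fun x => ((gaussianPDFReal 0 1 x).toNNReal : ENNReal) := rfl
  rw [h, integrable_withDensity_iff_integrable_smul (measurable_gaussianPDFReal 0 1).real_toNNReal]
  constructor <;> intro hh <;> refine hh.congr (Filter.Eventually.of_forall fun x => ?_) <;>
    simp [NNReal.smul_def, Real.coe_toNNReal _ (gaussianPDFReal_nonneg 0 1 x)]

lemma int_vol_1 : Integrable (fun x : ℝ => x * Real.exp (-(1/2) * x^2)) := by
  have := integrable_mul_exp_neg_mul_sq (b := 1/2) (by norm_num)
  exact this.congr (Filter.Eventually.of_forall fun x => by ring_nf)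

lemma int_vol_2 : Integrable (fun x : ℝ => x^2 * Real.exp (-(1/2) * x^2)) := by
  have := integrable_rpow_mul_exp_neg_mul_sq (by norm_num : (0:ℝ) < 1/2) (by norm_num : (-1:ℝ) < 2)
  refine this.congr (Filter.Eventually.of_forall fun x => ?_)
  norm_num

lemma gauss_int_1 : Integrable (fun x : ℝ => x) (gaussianReal 0 1) := by
  rw [gauss_integrable_iff]
  refine (int_vol_1.const_mul ((Real.sqrt (2*π))⁻¹)).congr (Filter.Eventually.of_forall fun x => ?_)
  simp only [gauss_pdf01]; ring

lemma gauss_int_2 : Integrable (fun x : ℝ => x^2) (gaussianReal 0 1) := by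
  rw [gauss_integrable_iff]
  refine (int_vol_2.const_mul ((Real.sqrt (2*π))⁻¹)).congr (Filter.Eventually.of_forall fun x => ?_)
  simp only [gauss_pdf01]; ring

lemma odd_vol : ∫ x : ℝ, x * Real.exp (-(1/2) * x^2) = 0 := by
  set F : ℝ → ℝ := fun x => x * Real.exp (-(1/2) * x^2) with hF
  have hint : Integrable F := int_vol_1
  have h1 : ∫ x in Set.Iic (0:ℝ), F x = - ∫ x in Set.Ioi (0:ℝ), F x := by
    have h := integral_comp_neg_Ioi (0:ℝ) F
    rw [neg_zero] at h
    rw [← h, ← integral_neg]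
    refine setIntegral_congr_fun measurableSet_Ioi fun x _ => ?_
    simp only [hF]; ring_nf
  calc ∫ x, F x = ∫ x in Set.Iic 0 ∪ Set.Ioi 0, F x := by
        rw [Set.Iic_union_Ioi, Measure.restrict_univ]
    _ = (∫ x in Set.Iic (0:ℝ), F x) + ∫ x in Set.Ioi (0:ℝ), F x := by
        rw [setIntegral_union (Set.Iic_disjoint_Ioi le_rfl) measurableSet_Ioi
          hint.integrableOn hint.integrableOn]
    _ = 0 := by rw [h1]; ring

lemma even_vol : ∫ x : ℝ, x^2 * Real.exp (-(1/2) * x^2) = Real.sqrt (2*π) := by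
  have habs : ∫ x : ℝ, x^2 * Real.exp (-(1/2) * x^2)
      = 2 * ∫ x in Set.Ioi (0:ℝ), x^2 * Real.exp (-(1/2) * x^2) := by
    rw [← integral_comp_abs (f := fun t => t^2 * Real.exp (-(1/2) * t^2))]
    congr 1; funext x; rw [sq_abs]
  have hIoi : ∫ x in Set.Ioi (0:ℝ), x^2 * Real.exp (-(1/2) * x^2)
      = ((1:ℝ)/2) ^ (-((2:ℝ)+1)/2) * (1/2) * Real.Gamma (((2:ℝ)+1)/2) := by
    rw [← integral_rpow_mul_exp_neg_mul_rpow (p := 2) (q := 2) (b := 1/2) (by norm_num)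
      (by norm_num) (by norm_num)]
    refine setIntegral_congr_fun measurableSet_Ioi fun x hx => ?_
    rw [show ((2:ℝ)) = ((2:ℕ):ℝ) by norm_num, Real.rpow_natCast x 2]
  have hGamma : Real.Gamma (((2:ℝ)+1)/2) = (1/2) * Real.sqrt π := by
    rw [show ((2:ℝ)+1)/2 = 1/2 + 1 by norm_num, Real.Gamma_add_one (by norm_num),
      Real.Gamma_one_half_eq]
  have hrpow : ((1:ℝ)/2) ^ (-((2:ℝ)+1)/2) = 2 * Real.sqrt 2 := by
    rw [show -((2:ℝ)+1)/2 = -(3/2) by norm_num, Real.rpow_neg (by norm_num), one_div,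
      Real.inv_rpow (by norm_num), inv_inv, show (3:ℝ)/2 = 1 + 1/2 by norm_num,
      Real.rpow_add (by norm_num), Real.rpow_one, ← Real.sqrt_eq_rpow]
  rw [habs, hIoi, hGamma, hrpow, Real.sqrt_mul (by norm_num : (0:ℝ) ≤ 2)]
  have h2 : Real.sqrt 2 * Real.sqrt 2 = 2 := Real.mul_self_sqrt (by norm_num)
  nlinarith [Real.sqrt_nonneg (2:ℝ), Real.sqrt_nonneg π]

lemma sqrt2pi_pos : 0 < Real.sqrt (2*π) := Real.sqrt_pos.2 (by positivity)

lemma gauss_mean : ∫ x, x ∂(gaussianReal 0 1) = 0 := by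
  rw [gauss_integral_eq]
  have : ∫ x : ℝ, gaussianPDFReal 0 1 x * x
      = (Real.sqrt (2*π))⁻¹ * ∫ x : ℝ, x * Real.exp (-(1/2) * x^2) := by
    rw [← integral_const_mul]
    congr 1; funext x; rw [gauss_pdf01]; ring
  rw [this, odd_vol, mul_zero]

lemma gauss_sq : ∫ x, x^2 ∂(gaussianReal 0 1) = 1 := by
  rw [gauss_integral_eq]
  have : ∫ x : ℝ, gaussianPDFReal 0 1 x * x^2
      = (Real.sqrt (2*π))⁻¹ * ∫ x : ℝ, x^2 * Real.exp (-(1/2) * x^2) := by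
    rw [← integral_const_mul]
    congr 1; funext x; rw [gauss_pdf01]; ring
  rw [this, even_vol, inv_mul_cancel₀ (ne_of_gt sqrt2pi_pos)]

lemma gauss_affine_integrable (a b : ℝ) :
    Integrable (fun x => (a + b * x)^2) (gaussianReal 0 1) := by
  have h : (fun x : ℝ => (a + b * x)^2)
      = fun x => (a^2 + (2*a*b) * x) + b^2 * x^2 := by funext x; ring
  rw [h]
  exact ((integrable_const _).add (gauss_int_1.const_mul _)).add (gauss_int_2.const_mul _)

lemma gauss_affine_integral (a b : ℝ) :
    ∫ x, (a + b * x)^2 ∂(gaussianReal 0 1) = a^2 + b^2 := by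
  have h : (fun x : ℝ => (a + b * x)^2)
      = fun x => (a^2 + (2*a*b) * x) + b^2 * x^2 := by funext x; ring
  have i1 : Integrable (fun x : ℝ => a^2 + (2*a*b) * x) (gaussianReal 0 1) := by
    simpa using (integrable_const (a^2)).add (gauss_int_1.const_mul (2*a*b))
  have i2 : Integrable (fun x : ℝ => b^2 * x^2) (gaussianReal 0 1) := gauss_int_2.const_mul _
  rw [h, integral_add i1 i2, integral_add (integrable_const _) (gauss_int_1.const_mul _),
    integral_const_mul, integral_const_mul, gauss_mean, gauss_sq, integral_const]
  simp

noncomputable def stdGaussPi (d : ℕ) : Measure (Fin d → ℝ) :=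
  Measure.pi fun _ => gaussianReal 0 1

instance (d : ℕ) : IsProbabilityMeasure (stdGaussPi d) := by
  unfold stdGaussPi; infer_instance

lemma eval_mp {d : ℕ} (i : Fin d) :
    MeasurePreserving (fun z : Fin d → ℝ => z i) (stdGaussPi d) (gaussianReal 0 1) := by
  refine ⟨measurable_pi_apply i, ?_⟩
  ext s hs
  rw [Measure.map_apply (measurable_pi_apply i) hs]
  rw [show (fun z : Fin d → ℝ => z i) ⁻¹' s
    = Set.pi Set.univ (Function.update (fun _ => Set.univ) i s) from Set.eval_preimage]
  rw [stdGaussPi, Measure.pi_pi]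
  rw [Finset.prod_eq_single i (fun j _ hj => by simp [Function.update_of_ne hj])
    (fun h => absurd (Finset.mem_univ i) h)]
  simp

lemma coord_mp (m s : ℝ) :
    MeasurePreserving (fun x : ℝ => m + s * x) (gaussianReal 0 1)
      (gaussianReal m ⟨s ^ 2, sq_nonneg _⟩) := by
  refine ⟨(measurable_id.const_mul s).const_add m, ?_⟩
  have hcomp : (fun x : ℝ => m + s * x) = (fun x : ℝ => x + m) ∘ (fun x : ℝ => s * x) := by
    funext x; simp [add_comm]
  rw [hcomp, ← Measure.map_map (measurable_id'.add_const m) (measurable_id'.const_mul s),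
    gaussianReal_map_const_mul, gaussianReal_map_add_const]
  congr 1
  · simp
  · ext; simp; rfl

lemma T_mp {d : ℕ} (μ σ : EuclideanSpace ℝ (Fin d)) :
    MeasurePreserving (fun (z : Fin d → ℝ) => (WithLp.toLp 2 (fun i => μ i + σ i * z i) : EuclideanSpace ℝ (Fin d)))
      (stdGaussPi d) (gaussianPi μ σ) :=
  (MeasurePreserving.mk (WithLp.measurable_toLp 2 _) rfl).comp
    (measurePreserving_pi (ι := Fin d) (α := fun _ => ℝ) (β := fun _ => ℝ)
      (hν := fun i => by
        haveI := instIsProbabilityMeasureGaussianReal (μ i) ⟨(σ i) ^ 2, sq_nonneg _⟩; infer_instance)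
      (fun _ => gaussianReal 0 1)
      (fun i => gaussianReal (μ i) ⟨(σ i) ^ (2:ℕ), sq_nonneg _⟩) (fun i => coord_mp (μ i) (σ i)))
/-- **Lipschitz integral probability metric bound between diagonal Gaussians** (combining
the coupling bound, `W₁ ≤ W₂`, and the closed-form Gaussian `W₂` distance, as used in the
proof of Lemma 2). For a `K`-Lipschitz `f : ℝ^d → ℝ` integrable against both Gaussians,
`|∫ f dN(μ₁, diag σ₁²) − ∫ f dN(μ₂, diag σ₂²)| ≤ K √(‖μ₁−μ₂‖² + ‖σ₁−σ₂‖²)`. -/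
theorem gaussian_lipschitz_ipm_bound {d : ℕ}
    (μ₁ μ₂ σ₁ σ₂ : EuclideanSpace ℝ (Fin d))
    (hσ₁ : ∀ i, 0 ≤ σ₁ i) (hσ₂ : ∀ i, 0 ≤ σ₂ i)
    (K : ℝ) (hK : 0 ≤ K) (f : EuclideanSpace ℝ (Fin d) → ℝ)
    (hf : ∀ z z', |f z - f z'| ≤ K * ‖z - z'‖)
    (hf₁ : Integrable f (gaussianPi μ₁ σ₁)) (hf₂ : Integrable f (gaussianPi μ₂ σ₂)) :
    |(∫ z, f z ∂gaussianPi μ₁ σ₁) - ∫ z, f z ∂gaussianPi μ₂ σ₂| ≤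
      K * Real.sqrt (‖μ₁ - μ₂‖ ^ 2 + ‖σ₁ - σ₂‖ ^ 2) := by
  classical
  set γ := stdGaussPi d with hγ
  -- Lipschitz continuity of f
  have hfc : Continuous f := by
    refine (LipschitzWith.of_dist_le_mul (K := ⟨K, hK⟩) (f := f) fun x y => ?_).continuous
    rw [Real.dist_eq, dist_eq_norm]; exact hf x y
  set T₁ : (Fin d → ℝ) → EuclideanSpace ℝ (Fin d) := fun z => WithLp.toLp 2 (fun i => μ₁ i + σ₁ i * z i)
  set T₂ : (Fin d → ℝ) → EuclideanSpace ℝ (Fin d) := fun z => WithLp.toLp 2 (fun i => μ₂ i + σ₂ i * z i)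
  have h₁ : MeasurePreserving T₁ γ (gaussianPi μ₁ σ₁) := T_mp μ₁ σ₁
  have h₂ : MeasurePreserving T₂ γ (gaussianPi μ₂ σ₂) := T_mp μ₂ σ₂
  have hI₁ : ∫ z, f z ∂gaussianPi μ₁ σ₁ = ∫ z, f (T₁ z) ∂γ := by
    rw [← h₁.map_eq, integral_map h₁.measurable.aemeasurable hfc.aestronglyMeasurable]
  have hI₂ : ∫ z, f z ∂gaussianPi μ₂ σ₂ = ∫ z, f (T₂ z) ∂γ := by
    rw [← h₂.map_eq, integral_map h₂.measurable.aemeasurable hfc.aestronglyMeasurable]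
  have hi₁ : Integrable (fun z => f (T₁ z)) γ := by
    rw [← h₁.map_eq] at hf₁
    exact (integrable_map_measure hfc.aestronglyMeasurable h₁.measurable.aemeasurable).1 hf₁
  have hi₂ : Integrable (fun z => f (T₂ z)) γ := by
    rw [← h₂.map_eq] at hf₂
    exact (integrable_map_measure hfc.aestronglyMeasurable h₂.measurable.aemeasurable).1 hf₂
  set a : Fin d → ℝ := fun i => μ₁ i - μ₂ i with ha
  set b : Fin d → ℝ := fun i => σ₁ i - σ₂ i with hb
  set w : (Fin d → ℝ) → EuclideanSpace ℝ (Fin d) := fun z => WithLp.toLp 2 (fun i => a i + b i * z i) with hw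
  set g : (Fin d → ℝ) → ℝ := fun z => ‖w z‖ with hg
  have hTw : ∀ z, T₁ z - T₂ z = w z := by
    intro z; ext i
    simp only [T₁, T₂, w, PiLp.sub_apply, PiLp.toLp_apply]
    ring
  have hgsq : ∀ z, g z ^ 2 = ∑ i, (a i + b i * z i) ^ 2 := by
    intro z
    show ‖w z‖ ^ 2 = _
    rw [EuclideanSpace.norm_eq, Real.sq_sqrt (by positivity)]
    refine Finset.sum_congr rfl fun i _ => ?_
    rw [Real.norm_eq_abs, sq_abs]
  have hwmeas : Measurable w := by
    have hcomp : ∀ i, Measurable fun z : Fin d → ℝ => a i + b i * z i :=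
      fun i => by fun_prop
    exact (WithLp.measurable_toLp 2 _).comp (measurable_pi_iff.2 hcomp)
  have hgmeas : AEStronglyMeasurable g γ := (continuous_norm.measurable.comp hwmeas).aestronglyMeasurable
  have hterm : ∀ i : Fin d, Integrable (fun z : Fin d → ℝ => (a i + b i * z i) ^ 2) γ := by
    intro i
    have := (eval_mp (d := d) i).map_eq
    have hint := gauss_affine_integrable (a i) (b i)
    rw [← this] at hint
    exact (integrable_map_measure
      (Continuous.aestronglyMeasurable (by continuity))
      (eval_mp i).measurable.aemeasurable).1 hint
  have hintsq : Integrable (fun z : Fin d → ℝ => ∑ i, (a i + b i * z i) ^ 2) γ :=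
    integrable_finset_sum _ fun i _ => hterm i
  have hMem : MemLp g 2 γ := by
    refine (memLp_two_iff_integrable_sq hgmeas).2 ?_
    refine hintsq.congr (Filter.Eventually.of_forall fun z => ?_)
    simp [Pi.pow_apply, (hgsq z).symm]
  have hIg : Integrable g γ := hMem.integrable one_le_two
  have hgint2 : ∫ z, g z ^ 2 ∂γ = ‖μ₁ - μ₂‖ ^ 2 + ‖σ₁ - σ₂‖ ^ 2 := by
    have hsum : ∫ z, g z ^ 2 ∂γ = ∑ i, ∫ z, (a i + b i * z i) ^ 2 ∂γ := by
      rw [show (fun z => g z ^ 2) = fun z : Fin d → ℝ => ∑ i, (a i + b i * z i) ^ 2 from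
        funext hgsq]
      exact integral_finset_sum _ fun i _ => hterm i
    have hcoord : ∀ i : Fin d, ∫ z, (a i + b i * z i) ^ 2 ∂γ = (a i)^2 + (b i)^2 := by
      intro i
      rw [← gauss_affine_integral (a i) (b i), ← (eval_mp (d := d) i).map_eq,
        integral_map (eval_mp i).measurable.aemeasurable
          (Continuous.aestronglyMeasurable (by continuity))]
    have hnμ : ‖μ₁ - μ₂‖ ^ 2 = ∑ i, (a i) ^ 2 := by
      rw [EuclideanSpace.norm_eq, Real.sq_sqrt (by positivity)]
      refine Finset.sum_congr rfl fun i _ => ?_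
      rw [Real.norm_eq_abs, sq_abs]; simp [ha, PiLp.sub_apply]
    have hnσ : ‖σ₁ - σ₂‖ ^ 2 = ∑ i, (b i) ^ 2 := by
      rw [EuclideanSpace.norm_eq, Real.sq_sqrt (by positivity)]
      refine Finset.sum_congr rfl fun i _ => ?_
      rw [Real.norm_eq_abs, sq_abs]; simp [hb, PiLp.sub_apply]
    rw [hsum, hnμ, hnσ]
    rw [← Finset.sum_add_distrib]
    exact Finset.sum_congr rfl fun i _ => hcoord i
  have hvar : (∫ z, g z ∂γ) ^ 2 ≤ ∫ z, g z ^ 2 ∂γ := by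
    have h0 := variance_nonneg g γ
    rw [variance_eq_sub hMem] at h0
    have : ∫ z, (g ^ 2) z ∂γ = ∫ z, g z ^ 2 ∂γ := by simp [Pi.pow_apply]
    rw [this] at h0
    linarith
  have hgnn : 0 ≤ ∫ z, g z ∂γ := integral_nonneg fun z => norm_nonneg _
  have hgle : ∫ z, g z ∂γ ≤ Real.sqrt (‖μ₁ - μ₂‖ ^ 2 + ‖σ₁ - σ₂‖ ^ 2) := by
    calc ∫ z, g z ∂γ = Real.sqrt ((∫ z, g z ∂γ) ^ 2) := (Real.sqrt_sq hgnn).symm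
      _ ≤ Real.sqrt (∫ z, g z ^ 2 ∂γ) := Real.sqrt_le_sqrt hvar
      _ = _ := by rw [hgint2]
  calc |(∫ z, f z ∂gaussianPi μ₁ σ₁) - ∫ z, f z ∂gaussianPi μ₂ σ₂|
      = |∫ z, (f (T₁ z) - f (T₂ z)) ∂γ| := by
        rw [hI₁, hI₂, integral_sub hi₁ hi₂]
    _ ≤ ∫ z, |f (T₁ z) - f (T₂ z)| ∂γ := by
        simpa [Real.norm_eq_abs] using
          norm_integral_le_integral_norm (μ := γ) (fun z => f (T₁ z) - f (T₂ z))
    _ ≤ ∫ z, K * g z ∂γ := by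
        refine integral_mono (hi₁.sub hi₂).abs (hIg.const_mul K) fun z => ?_
        calc |f (T₁ z) - f (T₂ z)| ≤ K * ‖T₁ z - T₂ z‖ := hf _ _
          _ = K * g z := by rw [hTw z]
    _ = K * ∫ z, g z ∂γ := integral_const_mul K _
    _ ≤ K * Real.sqrt (‖μ₁ - μ₂‖ ^ 2 + ‖σ₁ - σ₂‖ ^ 2) := by
        exact mul_le_mul_of_nonneg_left hgle hK
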